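/- Let A ⊆ ℝ^d and a ∈ A with reach(A, a) > 0. Then a is an interior point of A if and only if Tan(A, a) = ℝ^d. -/

import Mathlib

open Metric Set Filter
open scoped ENNReal RealInnerProductSpace Topology NNReal

set_option linter.unusedSectionVars false
set_option maxHeartbeats 1000000

noncomputable section

variable {E : Type*} [NormedAddCommGroup E] [InnerProductSpace ℝ E]

/-- `x` has a unique nearest point in `A`. -/
def UnpPt (A : Set E) (x : E) : Prop :=
  ∃! a, a ∈ A ∧ dist x a = Metric.infDist x A

/-- The reach of `A` at a point `a` (Federer). -/
def locReach (A : Set E) (a : E) : ℝ≥0∞ :=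
  ⨆ (r : ℝ≥0) (_ : ∀ x : E, dist x a < (r : ℝ) → UnpPt A x), (r : ℝ≥0∞)

/-- The (global) reach of `A`. -/
def setReach (A : Set E) : ℝ≥0∞ := ⨅ a ∈ A, locReach A a

/-- The tangent cone of `A` at `a` in the sense of Federer. -/
def Tan (A : Set E) (a : E) : Set E :=
  {u | u = 0 ∨ ∃ (x : ℕ → E) (r : ℕ → ℝ),
    (∀ i, x i ∈ A ∧ x i ≠ a ∧ 0 < r i) ∧
    Tendsto x atTop (nhds a) ∧
    Tendsto (fun i => r i • (x i - a)) atTop (nhds u)}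

/-- The normal cone of `A` at `a`: the dual cone of the tangent cone. -/
def Nor (A : Set E) (a : E) : Set E :=
  {u | ∀ v ∈ Tan A a, ⟪u, v⟫ ≤ 0}

section AuxPR

variable [FiniteDimensional ℝ E]

/-- In the region of unique nearest points, `A` is "closed". -/
private lemma aux_closed {A : Set E} {a : E} {ρ : ℝ}
    (hU : ∀ x : E, dist x a < ρ → UnpPt A x) {y : E}
    (hy : dist y a < ρ) (hyc : y ∈ closure A) : y ∈ A := by
  obtain ⟨p, ⟨hpA, hpd⟩, -⟩ := hU y hy
  have h0 : Metric.infDist y A = 0 :=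
    (Metric.mem_closure_iff_infDist_zero ⟨p, hpA⟩).mp hyc
  rw [h0] at hpd
  rw [dist_eq_zero.mp hpd]
  exact hpA

private lemma aux_pos {A : Set E} {a : E} {ρ : ℝ}
    (hU : ∀ x : E, dist x a < ρ → UnpPt A x) (haA : a ∈ A)
    {x : E} (hx : dist x a < ρ) (hxA : x ∉ A) :
    0 < Metric.infDist x A := by
  rcases (Metric.infDist_nonneg (s := A) (x := x)).lt_or_eq with h | h
  · exact h
  · exact absurd (aux_closed hU hx
      ((Metric.mem_closure_iff_infDist_zero ⟨a, haA⟩).mpr h.symm)) hxA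

/-- Near-minimizers of the distance to `A` are near the (unique) nearest point. -/
private lemma aux_nearmin {A : Set E} {a : E} {ρ : ℝ} (hρ : 0 < ρ)
    (hU : ∀ x : E, dist x a < ρ → UnpPt A x) (haA : a ∈ A)
    {x p : E} (hx : dist x a < ρ/4)
    (hpA : p ∈ A) (hpd : dist x p = Metric.infDist x A)
    {η : ℝ} (hη : 0 < η) :
    ∃ m : ℝ, 0 < m ∧ ∀ q ∈ A, dist x q ≤ Metric.infDist x A + m → dist q p ≤ η := by
  by_contra hc
  push_neg at hc
  set D := Metric.infDist x A with hDdef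
  have hDle : D ≤ dist x a := Metric.infDist_le_dist_of_mem haA
  have hD0 : 0 ≤ D := Metric.infDist_nonneg
  have hsel : ∀ n : ℕ, ∃ q, q ∈ A ∧ dist x q ≤ D + min (ρ/4) (1/(n+1)) ∧ η < dist q p := by
    intro n
    exact hc (min (ρ/4) (1/((n:ℝ)+1))) (lt_min (by linarith) (by positivity))
  choose q hqA hqd hqp using hsel
  have hmem : ∀ n, q n ∈ Metric.closedBall x (D + ρ/4) := by
    intro n
    rw [Metric.mem_closedBall, dist_comm]
    exact (hqd n).trans (by linarith [min_le_left (ρ/4) (1/((n:ℝ)+1))])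
  obtain ⟨qb, hqbmem, φ, hφ, hconv⟩ := (isCompact_closedBall x (D + ρ/4)).tendsto_subseq hmem
  have hqbA : qb ∈ A := by
    apply aux_closed hU ?_ (mem_closure_of_tendsto hconv
      (Filter.Eventually.of_forall fun n => hqA (φ n)))
    have h1 : dist qb x ≤ D + ρ/4 := Metric.mem_closedBall.mp hqbmem
    calc dist qb a ≤ dist qb x + dist x a := dist_triangle _ _ _
      _ < ρ := by linarith
  have hdistlim : Filter.Tendsto (fun n => dist x ((q ∘ φ) n)) Filter.atTop
      (nhds (dist x qb)) := Filter.Tendsto.dist tendsto_const_nhds hconv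
  have hgD : Filter.Tendsto (fun n : ℕ => D + 1/((n:ℝ)+1)) Filter.atTop (nhds D) := by
    simpa using tendsto_const_nhds.add (tendsto_one_div_add_atTop_nhds_zero_nat : Filter.Tendsto (fun n : ℕ => 1 / ((n : ℝ) + 1)) Filter.atTop (nhds 0))
  have hle : dist x qb ≤ D := by
    refine le_of_tendsto_of_tendsto' hdistlim hgD (fun n => ?_)
    have h1 : dist x (q (φ n)) ≤ D + min (ρ/4) (1/((φ n:ℝ)+1)) := hqd (φ n)
    have h2 : min (ρ/4) (1/((φ n:ℝ)+1)) ≤ 1/((φ n:ℝ)+1) := min_le_right _ _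
    have h3 : 1/((φ n:ℝ)+1) ≤ 1/((n:ℝ)+1) := by
      apply one_div_le_one_div_of_le (by positivity)
      have h4 : n ≤ φ n := hφ.le_apply
      exact_mod_cast add_le_add_left (Nat.cast_le.mpr h4) 1
    show dist x (q (φ n)) ≤ D + 1/((n:ℝ)+1)
    linarith
  have heq : dist x qb = D :=
    le_antisymm hle (Metric.infDist_le_dist_of_mem hqbA)
  obtain ⟨p₀, hp₀, hup⟩ := hU x (by linarith)
  have h1 : qb = p₀ := hup qb ⟨hqbA, heq⟩
  have h2 : p = p₀ := hup p ⟨hpA, hpd⟩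
  have hlim2 : η ≤ dist qb p :=
    ge_of_tendsto (Filter.Tendsto.dist hconv tendsto_const_nhds)
      (Filter.Eventually.of_forall fun n => (hqp (φ n)).le)
  rw [h1, h2] at hlim2
  simp only [dist_self] at hlim2
  linarith

/-- Dini-type growth of the distance function along the outward normal direction. -/
private lemma aux_dini {A : Set E} {a : E} {ρ : ℝ} (hρ : 0 < ρ)
    (hU : ∀ x : E, dist x a < ρ → UnpPt A x) (haA : a ∈ A)
    {x : E} (hx : dist x a ≤ ρ/8) (hxA : x ∉ A)
    {lam : ℝ} (hl0 : 0 < lam) (hl1 : lam < 1) {ε₀ : ℝ} (hε₀ : 0 < ε₀) :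
    ∃ y : E, 0 < dist y x ∧ dist y x < ε₀ ∧
      Metric.infDist x A + lam * dist y x < Metric.infDist y A := by
  set D := Metric.infDist x A with hDdef
  have hxρ : dist x a < ρ := by linarith
  have hD : 0 < D := aux_pos hU haA hxρ hxA
  obtain ⟨p, ⟨hpA, hpd⟩, -⟩ := hU x hxρ
  set η := D * (1 - lam) / 2 with hηdef
  have hη : 0 < η := div_pos (mul_pos hD (by linarith)) two_pos
  obtain ⟨m, hm0, hmin⟩ := aux_nearmin hρ hU haA (lt_of_le_of_lt hx (by linarith)) hpA hpd hη
  set ε := min (min (η/(2*D+3)) (m/3)) (min 1 (ε₀/2)) with hεdef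
  have hε : 0 < ε :=
    lt_min (lt_min (by positivity) (by positivity)) (lt_min one_pos (by positivity))
  have hε1 : ε ≤ 1 := le_trans (min_le_right _ _) (min_le_left _ _)
  have hεη : ε ≤ η/(2*D+3) := le_trans (min_le_left _ _) (min_le_left _ _)
  have hεm : ε ≤ m/3 := le_trans (min_le_left _ _) (min_le_right _ _)
  have hεε₀ : ε < ε₀ := lt_of_le_of_lt (le_trans (min_le_right _ _) (min_le_right _ _))
    (by linarith)
  set u := D⁻¹ • (x - p) with hudef
  have hxp : ‖x - p‖ = D := by rw [← dist_eq_norm]; exact hpd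
  have hu : ‖u‖ = 1 := by
    rw [hudef, norm_smul, hxp, Real.norm_eq_abs, abs_of_pos (inv_pos.mpr hD),
      inv_mul_cancel₀ hD.ne']
  have hdyx : dist (x + ε • u) x = ε := by
    rw [dist_eq_norm, add_sub_cancel_left, norm_smul, hu, Real.norm_eq_abs,
      abs_of_pos hε, mul_one]
  refine ⟨x + ε • u, by rw [hdyx]; exact hε, by rw [hdyx]; exact hεε₀, ?_⟩
  rw [hdyx]
  by_contra hcon
  push_neg at hcon
  have hlt : Metric.infDist (x + ε • u) A < D + lam*ε + ε^2 :=
    lt_of_le_of_lt hcon (lt_add_of_pos_right _ (by positivity))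
  obtain ⟨qq, hqA, hqd⟩ := (Metric.infDist_lt_iff ⟨a, haA⟩).mp hlt
  have hxq : dist x qq ≤ D + 3*ε := by
    calc dist x qq ≤ dist x (x + ε • u) + dist (x + ε • u) qq := dist_triangle _ _ _
      _ ≤ ε + (D + lam*ε + ε^2) := by
          rw [dist_comm x]
          exact add_le_add (le_of_eq hdyx) hqd.le
      _ ≤ D + 3*ε := by nlinarith
  have hqp : dist qq p ≤ η := hmin qq hqA (hxq.trans (by linarith))
  have hip : D^2 - η * D ≤ ⟪x - qq, x - p⟫ := by
    have h1 : ⟪x - qq, x - p⟫ = ⟪x - p, x - p⟫ + ⟪p - qq, x - p⟫ := by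
      rw [← inner_add_left]
      congr 1
      abel
    have h2 : ⟪x - p, x - p⟫ = D^2 := by
      rw [real_inner_self_eq_norm_sq, hxp]
    have h3 : |⟪p - qq, x - p⟫| ≤ ‖p - qq‖ * ‖x - p‖ := abs_real_inner_le_norm _ _
    have h4 : ‖p - qq‖ ≤ η := by rw [← dist_eq_norm, dist_comm]; exact hqp
    have h5 := neg_abs_le ⟪p - qq, x - p⟫
    rw [h1, h2]
    rw [hxp] at h3
    nlinarith [norm_nonneg (p - qq)]
  have h7 : D - η ≤ D⁻¹ * ⟪x - qq, x - p⟫ := by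
    have h := mul_le_mul_of_nonneg_left hip (inv_nonneg.mpr hD.le)
    calc D - η = D⁻¹ * (D^2 - η*D) := by field_simp
      _ ≤ _ := h
  have hxqD : D ≤ ‖x - qq‖ := by
    rw [← dist_eq_norm]
    exact Metric.infDist_le_dist_of_mem hqA
  have hexp : dist (x + ε • u) qq ^ 2
      = ‖x - qq‖^2 + 2 * (ε * (D⁻¹ * ⟪x - qq, x - p⟫)) + ε^2 := by
    rw [dist_eq_norm]
    have heq1 : x + ε • u - qq = (x - qq) + ε • u := by abel
    rw [heq1, norm_add_sq_real]
    have heq2 : ⟪x - qq, ε • u⟫ = ε * (D⁻¹ * ⟪x - qq, x - p⟫) := by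
      rw [hudef, real_inner_smul_right, real_inner_smul_right]
    have heq3 : ‖ε • u‖^2 = ε^2 := by
      rw [norm_smul, hu, Real.norm_eq_abs, abs_of_pos hε, mul_one]
    rw [heq2, heq3]
  have hsq : dist (x + ε • u) qq ^ 2 ≤ (D + lam*ε + ε^2)^2 :=
    pow_le_pow_left₀ dist_nonneg hqd.le 2
  have hkey : D^2 + 2*(ε*(D - η)) + ε^2 ≤ (D + lam*ε + ε^2)^2 := by
    have h8 : D^2 ≤ ‖x - qq‖^2 := pow_le_pow_left₀ hD.le hxqD 2
    have h9 : ε * (D - η) ≤ ε * (D⁻¹ * ⟪x - qq, x - p⟫) :=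
      mul_le_mul_of_nonneg_left h7 hε.le
    linarith [hexp, hsq]
  have h10 : ε * (2*D+3) ≤ η := by
    rw [← le_div_iff₀ (by positivity)]
    exact hεη
  have hηeq : 2*η = D*(1-lam) := by rw [hηdef]; ring
  clear_value D η ε u
  have c1 : 2*ε*D - 2*(ε*η) + ε^2
      ≤ 2*D*lam*ε + 2*D*ε^2 + lam^2*ε^2 + 2*lam*ε^3 + ε^4 := by nlinarith [hkey]
  have e1 : lam^2*ε^2 ≤ ε^2 := by
    nlinarith [mul_nonneg (mul_nonneg (sub_nonneg.mpr hl1.le)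
      (by linarith : (0:ℝ) ≤ 1+lam)) (sq_nonneg ε)]
  have hle1 : lam*ε ≤ 1 := mul_le_one₀ hl1.le hε.le hε1
  have e2 : 2*lam*ε^3 ≤ 2*ε^2 := by
    nlinarith [mul_nonneg (sub_nonneg.mpr hle1) (sq_nonneg ε)]
  have hε2 : ε^2 ≤ 1 := by nlinarith [hε, hε1]
  have e3 : ε^4 ≤ ε^2 := by
    nlinarith [mul_nonneg (sub_nonneg.mpr hε2) (sq_nonneg ε)]
  have hηε : 2*(ε*η) = ε*(D*(1-lam)) := by rw [← hηeq]; ring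
  have c2 : ε*(D*(1-lam)) ≤ ε*((2*D+3)*ε) := by linarith [c1, e1, e2, e3, hηε]
  have c3 : D*(1-lam) ≤ (2*D+3)*ε := (mul_le_mul_iff_right₀ hε).mp c2
  have c4 : (2*D+3)*ε ≤ η := by linarith [h10]
  linarith [hη, hηeq, c3, c4]

/-- Maximum-principle growth: from any seed outside `A` near `a`, there is a point on the
sphere of radius `ρ/8` whose distance to `A` is almost `lam` times the travelled radius. -/
private lemma aux_grow {A : Set E} {a : E} {ρ : ℝ} (hρ : 0 < ρ)
    (hU : ∀ x : E, dist x a < ρ → UnpPt A x) (haA : a ∈ A)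
    {seed : E} (hs : dist seed a < ρ/8) (hsA : seed ∉ A)
    {lam : ℝ} (hl0 : 0 < lam) (hl1 : lam < 1) :
    ∃ z : E, dist z a = ρ/8 ∧
      Metric.infDist seed A + lam * (ρ/8 - dist seed a) ≤ Metric.infDist z A := by
  have hg : Continuous fun y : E => Metric.infDist y A - lam * dist y seed :=
    (Metric.continuous_infDist_pt A).sub
      (continuous_const.mul (continuous_id.dist continuous_const))
  obtain ⟨z, hzK, hmax⟩ := (isCompact_closedBall a (ρ/8)).exists_isMaxOn
      ⟨a, Metric.mem_closedBall_self (by positivity)⟩ hg.continuousOn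
  have hzr : dist z a ≤ ρ/8 := Metric.mem_closedBall.mp hzK
  have hseedK : seed ∈ Metric.closedBall a (ρ/8) := Metric.mem_closedBall.mpr hs.le
  have hgs : Metric.infDist seed A ≤ Metric.infDist z A - lam * dist z seed := by
    have h := hmax hseedK
    simp only [Set.mem_setOf_eq, dist_self, mul_zero, sub_zero] at h
    exact h
  rcases eq_or_lt_of_le hzr with heq | hlt
  · refine ⟨z, heq, ?_⟩
    have h1 : ρ/8 - dist seed a ≤ dist z seed := by
      have h := dist_triangle z seed a
      linarith [heq]
    have h2 : lam * (ρ/8 - dist seed a) ≤ lam * dist z seed :=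
      mul_le_mul_of_nonneg_left h1 hl0.le
    linarith [hgs]
  · exfalso
    have hsp : 0 < Metric.infDist seed A := aux_pos hU haA (by linarith) hsA
    have hzpos : 0 < Metric.infDist z A := by
      have h4 : 0 ≤ lam * dist z seed := mul_nonneg hl0.le dist_nonneg
      linarith [hgs]
    have hzA : z ∉ A := fun hz => by
      rw [Metric.infDist_zero_of_mem hz] at hzpos
      exact lt_irrefl 0 hzpos
    obtain ⟨y, hy0, hyε, hykey⟩ := aux_dini hρ hU haA hzr hzA
      (lam := (1+lam)/2) (by linarith) (by linarith) (ε₀ := ρ/8 - dist z a) (by linarith)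
    have hyK : y ∈ Metric.closedBall a (ρ/8) := by
      have h := dist_triangle y z a
      exact Metric.mem_closedBall.mpr (by linarith)
    have hle : Metric.infDist y A - lam * dist y seed
        ≤ Metric.infDist z A - lam * dist z seed := by
      have h := hmax hyK
      simpa only [Set.mem_setOf_eq] using h
    have hm : lam * dist y seed ≤ lam * (dist y z + dist z seed) :=
      mul_le_mul_of_nonneg_left (dist_triangle y z seed) hl0.le
    nlinarith [mul_pos (show (0:ℝ) < (1-lam)/2 by linarith) hy0]

/-- If `a` is not interior, there is a perfect exterior tangent ball at `a`. -/
private lemma aux_ball {A : Set E} {a : E} {ρ : ℝ} (hρ : 0 < ρ)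
    (hU : ∀ x : E, dist x a < ρ → UnpPt A x) (haA : a ∈ A)
    (hnot : a ∉ interior A) :
    ∃ z : E, dist z a = ρ/8 ∧ Metric.infDist z A = ρ/8 := by
  have seeds : ∀ n : ℕ, ∃ s : E, s ∉ A ∧ dist s a < min (ρ/8) (1/(n+1)) := by
    intro n
    by_contra hcon
    push_neg at hcon
    apply hnot
    apply mem_interior_iff_mem_nhds.mpr
    apply Filter.mem_of_superset (Metric.ball_mem_nhds a
      (show (0:ℝ) < min (ρ/8) (1/((n:ℝ)+1)) from lt_min (by positivity) (by positivity)))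
    intro w hw
    by_contra hwA
    exact absurd (Metric.mem_ball.mp hw) (not_lt.mpr (hcon w hwA))
  choose s hsA hsd using seeds
  have key : ∀ n : ℕ, ∃ z : E, dist z a = ρ/8 ∧
      ρ/8 - (ρ/8 + 1) * (1/((n:ℝ)+1)) ≤ Metric.infDist z A := by
    intro n
    have h1 : dist (s n) a < ρ/8 := lt_of_lt_of_le (hsd n) (min_le_left _ _)
    have h2 : dist (s n) a < 1/((n:ℝ)+1) := lt_of_lt_of_le (hsd n) (min_le_right _ _)
    have hl0 : (0:ℝ) < ((n:ℝ)+1)/((n:ℝ)+2) := by positivity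
    have hl1 : ((n:ℝ)+1)/((n:ℝ)+2) < 1 := (div_lt_one (by positivity)).mpr (by linarith)
    obtain ⟨z, hz1, hz2⟩ := aux_grow hρ hU haA h1 (hsA n) hl0 hl1
    refine ⟨z, hz1, le_trans ?_ hz2⟩
    have h3 : 0 ≤ Metric.infDist (s n) A := Metric.infDist_nonneg
    have h4 : ρ/8 - 1/((n:ℝ)+1) ≤ ρ/8 - dist (s n) a := by linarith
    have h5 : ((n:ℝ)+1)/((n:ℝ)+2) * (ρ/8 - 1/((n:ℝ)+1))
        ≤ ((n:ℝ)+1)/((n:ℝ)+2) * (ρ/8 - dist (s n) a) :=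
      mul_le_mul_of_nonneg_left h4 hl0.le
    have e1 : ((n:ℝ)+1)/((n:ℝ)+2) * (ρ/8 - 1/((n:ℝ)+1))
        = ρ/8 - (ρ/8+1) * (1/((n:ℝ)+2)) := by
      field_simp
      ring
    have h6 : (ρ/8+1) * (1/((n:ℝ)+2)) ≤ (ρ/8+1) * (1/((n:ℝ)+1)) :=
      mul_le_mul_of_nonneg_left
        (one_div_le_one_div_of_le (by positivity) (by linarith)) (by positivity)
    linarith
  choose z hz1 hz2 using key
  have hzmem : ∀ n, z n ∈ Metric.closedBall a (ρ/8) :=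
    fun n => Metric.mem_closedBall.mpr (hz1 n).le
  obtain ⟨zb, hzbmem, φ, hφ, hconv⟩ := (isCompact_closedBall a (ρ/8)).tendsto_subseq hzmem
  have hdist : dist zb a = ρ/8 := by
    have h1 : Filter.Tendsto (fun n => dist ((z ∘ φ) n) a) Filter.atTop
        (nhds (dist zb a)) := Filter.Tendsto.dist hconv tendsto_const_nhds
    have h2 : (fun n => dist ((z ∘ φ) n) a) = fun _ => ρ/8 :=
      funext fun n => hz1 (φ n)
    rw [h2] at h1
    exact tendsto_nhds_unique h1 tendsto_const_nhds
  refine ⟨zb, hdist, le_antisymm (hdist ▸ Metric.infDist_le_dist_of_mem haA) ?_⟩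
  have hinf : Filter.Tendsto (fun n => Metric.infDist ((z ∘ φ) n) A) Filter.atTop
      (nhds (Metric.infDist zb A)) :=
    ((Metric.continuous_infDist_pt A).tendsto zb).comp hconv
  have hlow : Filter.Tendsto (fun n : ℕ => ρ/8 - (ρ/8+1) * (1/((n:ℝ)+1)))
      Filter.atTop (nhds (ρ/8)) := by
    have h := tendsto_one_div_add_atTop_nhds_zero_nat.const_mul (ρ/8+1)
    simpa using tendsto_const_nhds.sub h
  refine le_of_tendsto_of_tendsto' hlow hinf (fun n => ?_)
  have h3 : 1/((φ n:ℝ)+1) ≤ 1/((n:ℝ)+1) := by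
    apply one_div_le_one_div_of_le (by positivity)
    have h4 : n ≤ φ n := hφ.le_apply
    exact_mod_cast add_le_add_left (Nat.cast_le.mpr h4) 1
  have h4 : (ρ/8+1) * (1/((φ n:ℝ)+1)) ≤ (ρ/8+1) * (1/((n:ℝ)+1)) :=
    mul_le_mul_of_nonneg_left h3 (by positivity)
  have h5 := hz2 (φ n)
  simp only [Function.comp]
  linarith

end AuxPR

/-- At a point of positive reach, a is interior to A iff the tangent cone is all of ℝ^d. -/
theorem stmt3 {d : ℕ} (A : Set (EuclideanSpace ℝ (Fin d)))
    (a : EuclideanSpace ℝ (Fin d)) (ha : a ∈ A) (h : 0 < locReach A a) :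
    a ∈ interior A ↔ Tan A a = univ := by
  constructor
  · intro hint
    ext u
    simp only [Set.mem_univ, iff_true]
    rcases eq_or_ne u 0 with h0 | h0
    · exact Or.inl h0
    right
    obtain ⟨ε, hε, hball⟩ := Metric.isOpen_iff.mp isOpen_interior a hint
    have hnu : 0 < ‖u‖ := norm_pos_iff.mpr h0
    refine ⟨fun i => a + (ε / (2 * ‖u‖ * ((i:ℝ)+1))) • u,
      fun i => (2 * ‖u‖ * ((i:ℝ)+1)) / ε, fun i => ⟨?_, ?_, ?_⟩, ?_, ?_⟩
    · apply interior_subset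
      apply hball
      rw [Metric.mem_ball, dist_eq_norm, add_sub_cancel_left, norm_smul,
        Real.norm_eq_abs, abs_of_pos (by positivity)]
      have e1 : ε / (2 * ‖u‖ * ((i:ℝ)+1)) * ‖u‖ = ε / (2 * ((i:ℝ)+1)) := by
        field_simp
      rw [e1]
      have : (1:ℝ) < 2 * ((i:ℝ)+1) := by
        have : (0:ℝ) ≤ (i:ℝ) := Nat.cast_nonneg i
        linarith
      exact div_lt_self hε this
    · intro heq
      have h1 : (ε / (2 * ‖u‖ * ((i:ℝ)+1))) • u = 0 := by
        have := congrArg (fun w => w - a) heq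
        simpa using this
      rcases smul_eq_zero.mp h1 with h2 | h2
      · exact absurd h2 (by positivity)
      · exact h0 h2
    · positivity
    · have hc : Filter.Tendsto (fun i : ℕ => ε / (2 * ‖u‖ * ((i:ℝ)+1)))
          Filter.atTop (nhds 0) := by
        have h := tendsto_one_div_add_atTop_nhds_zero_nat.const_mul (ε / (2*‖u‖))
        have e : (fun i : ℕ => ε / (2 * ‖u‖ * ((i:ℝ)+1)))
            = fun i : ℕ => (ε/(2*‖u‖)) * (1/((i:ℝ)+1)) := by
          funext i
          rw [div_mul_div_comm, mul_one]
        rw [e]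
        simpa using h
      have h1 := hc.smul_const u
      rw [zero_smul] at h1
      simpa using tendsto_const_nhds.add h1
    · have e : (fun i : ℕ => ((2 * ‖u‖ * ((i:ℝ)+1)) / ε) •
          ((a + (ε / (2 * ‖u‖ * ((i:ℝ)+1))) • u) - a)) = fun _ => u := by
        funext i
        rw [add_sub_cancel_left, smul_smul,
          show (2 * ‖u‖ * ((i:ℝ)+1)) / ε * (ε / (2 * ‖u‖ * ((i:ℝ)+1))) = 1 by
            field_simp, one_smul]
      rw [e]
      exact tendsto_const_nhds
  · intro htan
    by_contra hnot
    have hex : ∃ r : ℝ≥0, 0 < r ∧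
        ∀ x : EuclideanSpace ℝ (Fin d), dist x a < (r:ℝ) → UnpPt A x := by
      by_contra hcon
      push_neg at hcon
      have hle : locReach A a ≤ 0 := by
        rw [locReach]
        refine iSup_le fun r => iSup_le fun hP => ?_
        by_cases hr0 : 0 < r
        · obtain ⟨xx, hx1, hx2⟩ := hcon r hr0
          exact absurd (hP xx hx1) hx2
        · push_neg at hr0
          simp [le_zero_iff.mp hr0]
      exact h.not_ge hle
    obtain ⟨r, hr0, hU⟩ := hex
    have hρ : 0 < (r:ℝ) := by exact_mod_cast hr0
    obtain ⟨z, hz1, hz2⟩ := aux_ball hρ hU ha hnot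
    have hu : (z - a) ∈ Tan A a := htan ▸ Set.mem_univ _
    have hzne : z - a ≠ 0 := by
      intro hzz
      rw [sub_eq_zero] at hzz
      rw [hzz, dist_self] at hz1
      linarith
    rcases hu with h0 | ⟨y, rr, hprop, hya, hlim⟩
    · exact hzne h0
    have hineq : ∀ i, 2 * ⟪z - a, rr i • (y i - a)⟫
        ≤ ‖rr i • (y i - a)‖ * ‖y i - a‖ := by
      intro i
      have h1 : (r:ℝ)/8 ≤ dist z (y i) := hz2 ▸ Metric.infDist_le_dist_of_mem (hprop i).1
      have h2 : ((r:ℝ)/8)^2 ≤ ‖z - y i‖^2 := by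
        rw [← dist_eq_norm]
        exact pow_le_pow_left₀ (by positivity) h1 2
      have h3 : ‖z - y i‖^2 = ‖z - a‖^2 - 2*⟪z - a, y i - a⟫ + ‖y i - a‖^2 := by
        have e : z - y i = (z - a) - (y i - a) := by abel
        rw [e, norm_sub_sq_real]
      have h4 : ‖z - a‖ = (r:ℝ)/8 := by rw [← dist_eq_norm]; exact hz1
      have h5 : 2*⟪z - a, y i - a⟫ ≤ ‖y i - a‖^2 := by nlinarith [h2, h3, h4]
      have h6 : 0 < rr i := (hprop i).2.2
      calc 2*⟪z - a, rr i • (y i - a)⟫ = rr i * (2*⟪z - a, y i - a⟫) := by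
            rw [real_inner_smul_right]; ring
        _ ≤ rr i * ‖y i - a‖^2 := mul_le_mul_of_nonneg_left h5 h6.le
        _ = ‖rr i • (y i - a)‖ * ‖y i - a‖ := by
            rw [norm_smul, Real.norm_eq_abs, abs_of_pos h6]; ring
    have hL : Filter.Tendsto (fun i => 2*⟪z - a, rr i • (y i - a)⟫)
        Filter.atTop (nhds (2*⟪z - a, z - a⟫)) :=
      (Filter.Tendsto.inner tendsto_const_nhds hlim).const_mul 2
    have h7 : Filter.Tendsto (fun i => ‖y i - a‖) Filter.atTop (nhds 0) := by
      have := (hya.sub_const a).norm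
      simpa using this
    have hR : Filter.Tendsto (fun i => ‖rr i • (y i - a)‖ * ‖y i - a‖)
        Filter.atTop (nhds (‖z - a‖ * 0)) := hlim.norm.mul h7
    have hfinal : 2*⟪z - a, z - a⟫ ≤ ‖z - a‖ * 0 :=
      le_of_tendsto_of_tendsto' hL hR hineq
    rw [real_inner_self_eq_norm_sq] at hfinal
    have h8 : ‖z - a‖ = (r:ℝ)/8 := by rw [← dist_eq_norm]; exact hz1
    rw [h8] at hfinal
    nlinarith [hρ]
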